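/- arXiv:2605.06870 — 2 statements merged into one kernel-verified Lean document; each statement's English description precedes it below -/
import Mathlib

section
/- Let σ > 0, β > 0, c ∈ [0,1], D > 0 be constants, and define the vector field F(u, v) = 2σ² v (1 − c u v) − 2βD/u and G(u, v) = 2σ² c u (1 − u v) on (0,∞) × ℝ. Then the symmetry condition ∂F/∂v (u, v) = ∂G/∂u (u, v) holds for all (u, v) in the domain if and only if c = 1. In particular, for c ≠ 1 the diagonal RD-AE flow is not the gradient flow of any C² potential. -/
private lemma derivF_aux (σ β c D u v : ℝ) :
    deriv (fun w => 2 * σ ^ 2 * w * (1 - c * u * w) - 2 * β * D / u) v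
      = 2 * σ ^ 2 - 4 * σ ^ 2 * c * u * v := by
  have h1 : HasDerivAt (fun w : ℝ => 2 * σ ^ 2 * w) (2 * σ ^ 2) v := by
    simpa using (hasDerivAt_id v).const_mul (2 * σ ^ 2)
  have h2 : HasDerivAt (fun w : ℝ => 1 - c * u * w) (-(c * u)) v := by
    simpa using ((hasDerivAt_id v).const_mul (c * u)).const_sub 1
  have h : HasDerivAt (fun w => 2 * σ ^ 2 * w * (1 - c * u * w) - 2 * β * D / u)
      (2 * σ ^ 2 - 4 * σ ^ 2 * c * u * v) v := by
    have := (h1.mul h2).sub_const (2 * β * D / u)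
    exact this.congr_deriv (by ring)
  exact h.deriv

private lemma derivG_aux (σ c u v : ℝ) :
    deriv (fun w => 2 * σ ^ 2 * c * w * (1 - w * v)) u
      = 2 * σ ^ 2 * c - 4 * σ ^ 2 * c * u * v := by
  have h1 : HasDerivAt (fun w : ℝ => 2 * σ ^ 2 * c * w) (2 * σ ^ 2 * c) u := by
    simpa using (hasDerivAt_id u).const_mul (2 * σ ^ 2 * c)
  have h2 : HasDerivAt (fun w : ℝ => 1 - w * v) (-v) u := by
    simpa using ((hasDerivAt_id u).mul_const v).const_sub 1
  have h : HasDerivAt (fun w => 2 * σ ^ 2 * c * w * (1 - w * v))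
      (2 * σ ^ 2 * c - 4 * σ ^ 2 * c * u * v) u := by
    have := h1.mul h2
    exact this.congr_deriv (by ring)
  exact h.deriv

/-- **The diagonal RD-AE flow is not a gradient flow unless `c = 1`.**
For the vector field `F(u,v) = 2σ²v(1 − c u v) − 2βD/u`,
`G(u,v) = 2σ² c u (1 − u v)` on `(0,∞) × ℝ`, the symmetry condition
`∂F/∂v = ∂G/∂u` holds everywhere on the domain iff `c = 1`; in particular, for
`c ≠ 1` the flow is not the gradient flow of any `C²` potential. -/
theorem rdae_not_gradient_flow (σ β c D : ℝ) (hσ : 0 < σ) (hβ : 0 < β)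
    (hc : c ∈ Set.Icc (0 : ℝ) 1) (hD : 0 < D) :
    let F : ℝ → ℝ → ℝ := fun u v => 2 * σ ^ 2 * v * (1 - c * u * v) - 2 * β * D / u
    let G : ℝ → ℝ → ℝ := fun u v => 2 * σ ^ 2 * c * u * (1 - u * v)
    ((∀ u v : ℝ, 0 < u →
        deriv (fun w => F u w) v = deriv (fun w => G w v) u) ↔ c = 1) ∧
    (c ≠ 1 → ¬ ∃ Φ : ℝ × ℝ → ℝ,
      ContDiffOn ℝ 2 Φ {p : ℝ × ℝ | 0 < p.1} ∧
      ∀ u v : ℝ, 0 < u →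
        deriv (fun x => Φ (x, v)) u = -F u v ∧
        deriv (fun y => Φ (u, y)) v = -G u v) := by
  intro F G
  have hσ2 : (0 : ℝ) < σ ^ 2 := pow_pos hσ 2
  constructor
  · constructor
    · intro h
      have h1 : deriv (fun w => F 1 w) 0 = deriv (fun w => G w 0) 1 := h 1 0 one_pos
      have e1 : deriv (fun w => F 1 w) 0 = 2 * σ ^ 2 - 4 * σ ^ 2 * c * 1 * 0 :=
        derivF_aux σ β c D 1 0
      have e2 : deriv (fun w => G w 0) 1 = 2 * σ ^ 2 * c - 4 * σ ^ 2 * c * 1 * 0 :=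
        derivG_aux σ c 1 0
      rw [e1, e2] at h1
      nlinarith
    · intro hc1 u v hu
      have e1 : deriv (fun w => F u w) v = 2 * σ ^ 2 - 4 * σ ^ 2 * c * u * v :=
        derivF_aux σ β c D u v
      have e2 : deriv (fun w => G w v) u = 2 * σ ^ 2 * c - 4 * σ ^ 2 * c * u * v :=
        derivG_aux σ c u v
      rw [e1, e2, hc1]
      ring
  · rintro hcne ⟨Φ, hΦ2, hgrad⟩
    have hopen : IsOpen {p : ℝ × ℝ | 0 < p.1} := isOpen_lt continuous_const continuous_fst
    have hdiff : ∀ u v : ℝ, 0 < u → DifferentiableAt ℝ Φ (u, v) := fun u v hu =>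
      (hΦ2.contDiffAt (hopen.mem_nhds hu)).differentiableAt two_ne_zero
    -- derivative in the y-direction
    have hdy : ∀ u : ℝ, 0 < u → ∀ y : ℝ, HasDerivAt (fun y => Φ (u, y)) (-G u y) y := by
      intro u hu y
      have hd : DifferentiableAt ℝ (fun y : ℝ => Φ (u, y)) y :=
        (hdiff u y hu).comp y ((differentiableAt_const u).prodMk differentiableAt_id)
      have := hd.hasDerivAt
      rwa [(hgrad u y hu).2] at this
    -- key identity from integrating -G in y
    have key : ∀ u : ℝ, 0 < u →
        Φ (u, 1) = Φ (u, 0) - 2 * σ ^ 2 * c * u + σ ^ 2 * c * u ^ 2 := by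
      intro u hu
      set h : ℝ → ℝ := fun y => Φ (u, y) + 2 * σ ^ 2 * c * u * y - σ ^ 2 * c * u ^ 2 * y ^ 2
        with hdef
      have hh : ∀ y : ℝ, HasDerivAt h 0 y := by
        intro y
        have h1 := hdy u hu y
        have h2 : HasDerivAt (fun y : ℝ => 2 * σ ^ 2 * c * u * y) (2 * σ ^ 2 * c * u) y := by
          simpa using (hasDerivAt_id y).const_mul (2 * σ ^ 2 * c * u)
        have h3 : HasDerivAt (fun y : ℝ => σ ^ 2 * c * u ^ 2 * y ^ 2)
            (σ ^ 2 * c * u ^ 2 * (2 * y)) y := by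
          have := (hasDerivAt_pow 2 y).const_mul (σ ^ 2 * c * u ^ 2)
          exact this.congr_deriv (by ring)
        have := (h1.add h2).sub h3
        apply this.congr_deriv
        symm
        show (0 : ℝ) = -G u y + 2 * σ ^ 2 * c * u - σ ^ 2 * c * u ^ 2 * (2 * y)
        show (0 : ℝ) = -(2 * σ ^ 2 * c * u * (1 - u * y)) + 2 * σ ^ 2 * c * u
          - σ ^ 2 * c * u ^ 2 * (2 * y)
        ring
      have hc0 : h 1 = h 0 :=
        is_const_of_deriv_eq_zero (fun y => (hh y).differentiableAt) (fun y => (hh y).deriv) 1 0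
      have hc0' : Φ (u, 1) + 2 * σ ^ 2 * c * u * 1 - σ ^ 2 * c * u ^ 2 * 1 ^ 2
          = Φ (u, 0) + 2 * σ ^ 2 * c * u * 0 - σ ^ 2 * c * u ^ 2 * 0 ^ 2 := hc0
      nlinarith [hc0']
    -- differentiate the key identity in u at u = 1
    have hA : HasDerivAt (fun x : ℝ => Φ (x, 0)) (-F 1 0) 1 := by
      have hd : DifferentiableAt ℝ (fun x : ℝ => Φ (x, 0)) 1 :=
        (hdiff 1 0 one_pos).comp 1 (differentiableAt_id.prodMk (differentiableAt_const 0))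
      have := hd.hasDerivAt
      rwa [(hgrad 1 0 one_pos).1] at this
    have hB : HasDerivAt (fun x : ℝ => 2 * σ ^ 2 * c * x) (2 * σ ^ 2 * c) 1 := by
      simpa using (hasDerivAt_id (1 : ℝ)).const_mul (2 * σ ^ 2 * c)
    have hC : HasDerivAt (fun x : ℝ => σ ^ 2 * c * x ^ 2) (σ ^ 2 * c * 2) 1 := by
      have := (hasDerivAt_pow 2 (1 : ℝ)).const_mul (σ ^ 2 * c)
      exact this.congr_deriv (by ring)
    have hRHS : deriv (fun x : ℝ => Φ (x, 0) - 2 * σ ^ 2 * c * x + σ ^ 2 * c * x ^ 2) 1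
        = -F 1 0 - 2 * σ ^ 2 * c + σ ^ 2 * c * 2 := ((hA.sub hB).add hC).deriv
    have heq : deriv (fun x : ℝ => Φ (x, 1)) 1
        = deriv (fun x : ℝ => Φ (x, 0) - 2 * σ ^ 2 * c * x + σ ^ 2 * c * x ^ 2) 1 := by
      apply Filter.EventuallyEq.deriv_eq
      filter_upwards [Ioi_mem_nhds (by norm_num : (0 : ℝ) < 1)] with x hx
      have := key x hx
      linarith
    have hLHS : deriv (fun x : ℝ => Φ (x, 1)) 1 = -F 1 1 := (hgrad 1 1 one_pos).1
    rw [hLHS, hRHS] at heq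
    -- heq : -F 1 1 = -F 1 0 - 2σ²c + 2σ²c
    have hF11 : F 1 1 = 2 * σ ^ 2 * 1 * (1 - c * 1 * 1) - 2 * β * D / 1 := rfl
    have hF10 : F 1 0 = 2 * σ ^ 2 * 0 * (1 - c * 1 * 0) - 2 * β * D / 1 := rfl
    rw [hF11, hF10] at heq
    apply hcne
    have : 2 * σ ^ 2 * (1 - c) = 0 := by
      field_simp at heq
      nlinarith [heq]
    nlinarith
end

section
/- Let d ≥ 1, σ₁² ≥ σ₂² ≥ … ≥ σ_d² > 0, R > 0, and define δ_m(R) = (∏_{i=1}^m σ_i²)^{1/m} · 2^{−2R/m} for 1 ≤ m ≤ d. Suppose 1 ≤ k ≤ m ≤ d and δ_k(R) ≤ σ_k². Then k·δ_k(R) + Σ_{j=k+1}^d σ_j² ≥ m·δ_m(R) + Σ_{j=m+1}^d σ_j²; equivalently, the distortion of the scheme that water-fills rate R over only the top k modes and drops the rest is at least that of the scheme water-filling over the top m modes. -/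
/-- **Water-filling over more top modes never hurts.**
For a nonincreasing spectrum `σ₁² ≥ … ≥ σ_d² > 0` (0-indexed as `σsq 0, …, σsq (d−1)`),
rate `R > 0`, `1 ≤ k ≤ m ≤ d`, and feasibility `δ_k(R) ≤ σ_k²`, the distortion of
water-filling rate `R` over only the top `k` modes, `k·δ_k(R) + Σ_{j>k} σ_j²`, is at
least that of water-filling over the top `m` modes, where
`δ_n(R) = (∏_{i=1}^n σᵢ²)^{1/n}·2^{−2R/n}`. -/
theorem truncated_water_filling_monotone (d : ℕ) (hd : 1 ≤ d) (σsq : ℕ → ℝ)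
    (hpos : ∀ j, j < d → 0 < σsq j)
    (hmono : ∀ i j, i ≤ j → j < d → σsq j ≤ σsq i)
    (R : ℝ) (hR : 0 < R) (k m : ℕ) (hk : 1 ≤ k) (hkm : k ≤ m) (hmd : m ≤ d) :
    let δ : ℕ → ℝ := fun n =>
      (∏ i ∈ Finset.range n, σsq i) ^ ((1 : ℝ) / n) * (2 : ℝ) ^ (-2 * R / n)
    δ k ≤ σsq (k - 1) →
    k * δ k + ∑ j ∈ Finset.Ico k d, σsq j ≥
      m * δ m + ∑ j ∈ Finset.Ico m d, σsq j := by
  intro δ _hfeas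
  have hPpos : ∀ n, n ≤ d → 0 < ∏ i ∈ Finset.range n, σsq i := by
    intro n hn
    exact Finset.prod_pos fun i hi =>
      hpos i (lt_of_lt_of_le (Finset.mem_range.mp hi) hn)
  have hδpos : ∀ n, n ≤ d → 0 < δ n := by
    intro n hn
    exact mul_pos (Real.rpow_pos_of_pos (hPpos n hn) _)
      (Real.rpow_pos_of_pos two_pos _)
  have step : ∀ n, 1 ≤ n → n < d →
      ((n + 1 : ℕ) : ℝ) * δ (n + 1) ≤ (n : ℝ) * δ n + σsq n := by
    intro n hn1 hnd
    have hσ := hpos n hnd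
    have ha := hδpos n (le_of_lt hnd)
    have hn0 : (0 : ℝ) < (n : ℝ) := by exact_mod_cast hn1
    have hn1' : (0 : ℝ) < (n : ℝ) + 1 := by positivity
    set P := ∏ i ∈ Finset.range n, σsq i with hP
    have hPp : 0 < P := hPpos n (le_of_lt hnd)
    have key : δ (n + 1)
        = (δ n) ^ ((n : ℝ) / ((n : ℝ) + 1)) * (σsq n) ^ ((1 : ℝ) / ((n : ℝ) + 1)) := by
      show (∏ i ∈ Finset.range (n + 1), σsq i) ^ ((1 : ℝ) / (n + 1 : ℕ))
            * (2 : ℝ) ^ (-2 * R / (n + 1 : ℕ)) = _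
      rw [Finset.prod_range_succ]
      have h1 : (δ n) ^ ((n : ℝ) / ((n : ℝ) + 1))
          = P ^ ((1 : ℝ) / ((n : ℝ) + 1)) * (2 : ℝ) ^ (-2 * R / ((n : ℝ) + 1)) := by
        show (P ^ ((1 : ℝ) / (n : ℕ)) * (2 : ℝ) ^ (-2 * R / (n : ℕ))) ^ ((n : ℝ) / ((n : ℝ) + 1)) = _
        rw [Real.mul_rpow (le_of_lt (Real.rpow_pos_of_pos hPp _))
            (le_of_lt (Real.rpow_pos_of_pos two_pos _)),
          ← Real.rpow_mul (le_of_lt hPp), ← Real.rpow_mul (by norm_num : (0:ℝ) ≤ 2)]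
        have hn0' : (n : ℝ) ≠ 0 := ne_of_gt hn0
        congr 1
        · congr 1
          field_simp
        · congr 1
          field_simp
      have h2 : (P * σsq n) ^ ((1 : ℝ) / ((n : ℕ) + 1 : ℕ))
          = P ^ ((1 : ℝ) / ((n : ℝ) + 1)) * (σsq n) ^ ((1 : ℝ) / ((n : ℝ) + 1)) := by
        rw [Real.mul_rpow (le_of_lt hPp) (le_of_lt hσ)]
        norm_num
      push_cast
      push_cast at h2
      rw [h2, h1]
      ring
    have hw1 : (0 : ℝ) ≤ (n : ℝ) / ((n : ℝ) + 1) := by positivity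
    have hw2 : (0 : ℝ) ≤ (1 : ℝ) / ((n : ℝ) + 1) := by positivity
    have hsum : (n : ℝ) / ((n : ℝ) + 1) + (1 : ℝ) / ((n : ℝ) + 1) = 1 := by
      field_simp
    have amgm := Real.geom_mean_le_arith_mean2_weighted hw1 hw2
      (le_of_lt ha) (le_of_lt hσ) hsum
    rw [key]
    push_cast
    have := mul_le_mul_of_nonneg_left amgm (le_of_lt hn1')
    calc ((n : ℝ) + 1) * ((δ n) ^ ((n : ℝ) / ((n : ℝ) + 1)) * (σsq n) ^ ((1 : ℝ) / ((n : ℝ) + 1)))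
        ≤ ((n : ℝ) + 1) * ((n : ℝ) / ((n : ℝ) + 1) * δ n + (1 : ℝ) / ((n : ℝ) + 1) * σsq n) := this
      _ = (n : ℝ) * δ n + σsq n := by field_simp
  have main : ∀ n, k ≤ n → n ≤ d →
      (n : ℝ) * δ n ≤ (k : ℝ) * δ k + ∑ j ∈ Finset.Ico k n, σsq j := by
    intro n hkn
    induction n, hkn using Nat.le_induction with
    | base => simp
    | succ n hkn ih =>
      intro hnd
      have hnd' : n < d := hnd
      rw [Finset.sum_Ico_succ_top hkn]
      have h1 := step n (le_trans hk hkn) hnd'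
      have h2 := ih (le_of_lt hnd')
      push_cast at h1 ⊢
      linarith
  have hsplit : ∑ j ∈ Finset.Ico k d, σsq j
      = ∑ j ∈ Finset.Ico k m, σsq j + ∑ j ∈ Finset.Ico m d, σsq j :=
    (Finset.sum_Ico_consecutive _ hkm hmd).symm
  have hm := main m hkm hmd
  rw [ge_iff_le, hsplit]
  linarith
end
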